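/- Let C be a 2-identifying code in the square grid G_S and let c ∈ C be a codeword adjacent to another codeword of C. Then s_2(C;c) ≤ 35/6. -/

import Mathlib

open scoped Classical

noncomputable section

/-- The ball of radius `r` (in graph distance = l1 distance) around `c` in the square grid. -/
def sqBall (r : ℕ) (c : ℤ × ℤ) : Finset (ℤ × ℤ) :=
  (Finset.Icc (c.1 - r, c.2 - r) (c.1 + r, c.2 + r)).filter
    (fun x => (x.1 - c.1).natAbs + (x.2 - c.2).natAbs ≤ r)

/-- The identifying set `I_r(C;u) = B_r(u) ∩ C`. -/
def iset (r : ℕ) (C : Set (ℤ × ℤ)) (u : ℤ × ℤ) : Finset (ℤ × ℤ) :=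
  (sqBall r u).filter (fun x => x ∈ C)

/-- `C` is an `r`-identifying code in the square grid. -/
def IsIdCode (r : ℕ) (C : Set (ℤ × ℤ)) : Prop :=
  (∀ u, (iset r C u).Nonempty) ∧ ∀ u v : ℤ × ℤ, iset r C u = iset r C v → u = v

/-- The share `s_r(C;c)`. -/
def share (r : ℕ) (C : Set (ℤ × ℤ)) (c : ℤ × ℤ) : ℚ :=
  ∑ u ∈ sqBall r c, (1 : ℚ) / (iset r C u).card

lemma mem_sqBall_iff (r : ℕ) (c x : ℤ × ℤ) :
    x ∈ sqBall r c ↔ (x.1 - c.1).natAbs + (x.2 - c.2).natAbs ≤ r := by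
  simp only [sqBall, Finset.mem_filter, Finset.mem_Icc, Prod.le_def]
  omega

lemma trans_inj (c : ℤ × ℤ) : Function.Injective (fun p : ℤ × ℤ => (c.1 + p.1, c.2 + p.2)) := by
  intro a b h
  simp only [Prod.ext_iff] at h ⊢
  omega

lemma sqBall_add (r : ℕ) (c d : ℤ × ℤ) :
    sqBall r (c.1 + d.1, c.2 + d.2) = (sqBall r d).image (fun p => (c.1 + p.1, c.2 + p.2)) := by
  ext x
  simp only [mem_sqBall_iff, Finset.mem_image]
  constructor
  · intro h
    refine ⟨(x.1 - c.1, x.2 - c.2), by omega, by simp [Prod.ext_iff]⟩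
  · rintro ⟨p, hp, rfl⟩
    simpa using by omega

lemma sqBall_eq_image (r : ℕ) (c : ℤ × ℤ) :
    sqBall r c = (sqBall r (0, 0)).image (fun p => (c.1 + p.1, c.2 + p.2)) := by
  have := sqBall_add r c (0, 0)
  simpa using this

lemma card_sqBall2 (c : ℤ × ℤ) : (sqBall 2 c).card = 13 := by
  rw [sqBall_eq_image 2 c, Finset.card_image_of_injective _ (trans_inj c)]
  decide

lemma card_inter (c c' : ℤ × ℤ) (h : (c'.1 - c.1).natAbs + (c'.2 - c.2).natAbs = 1) :
    (sqBall 2 c ∩ sqBall 2 c').card = 8 := by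
  have hd : ∃ d : ℤ × ℤ, c' = (c.1 + d.1, c.2 + d.2) ∧
      (d = (1,0) ∨ d = (-1,0) ∨ d = (0,1) ∨ d = (0,-1)) := by
    refine ⟨(c'.1 - c.1, c'.2 - c.2), by simp, ?_⟩
    simp only [Prod.ext_iff]
    omega
  obtain ⟨d, rfl, hd⟩ := hd
  rw [sqBall_eq_image 2 c, sqBall_add 2 c d,
    ← Finset.image_inter _ _ (trans_inj c),
    Finset.card_image_of_injective _ (trans_inj c)]
  rcases hd with rfl | rfl | rfl | rfl <;> decide


/-- If a codeword `c` of a `2`-identifying code in the square grid is adjacent to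
another codeword, then `s_2(C;c) ≤ 35/6`. -/
theorem share_le_of_adjacent_codeword (C : Set (ℤ × ℤ)) (hC : IsIdCode 2 C)
    (c : ℤ × ℤ) (hc : c ∈ C)
    (hadj : ∃ c' ∈ C, (c'.1 - c.1).natAbs + (c'.2 - c.2).natAbs = 1) :
    share 2 C c ≤ 35 / 6 := by
  obtain ⟨c', hc'C, hdist⟩ := hadj
  have hne : c ≠ c' := by
    intro h
    rw [h] at hdist
    omega
  have hsymm : ∀ u v : ℤ × ℤ, u ∈ sqBall 2 v → v ∈ sqBall 2 u := by
    intro u v h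
    rw [mem_sqBall_iff] at h ⊢
    omega
  have hmemc : ∀ u ∈ sqBall 2 c, c ∈ iset 2 C u := by
    intro u hu
    exact Finset.mem_filter.2 ⟨hsymm u c hu, hc⟩
  have hmemc' : ∀ u ∈ sqBall 2 c', c' ∈ iset 2 C u := by
    intro u hu
    exact Finset.mem_filter.2 ⟨hsymm u c' hu, hc'C⟩
  have key : ∀ u ∈ sqBall 2 c, (1:ℚ)/(iset 2 C u).card ≤
      (if u ∈ sqBall 2 c' then (1:ℚ)/3 else 1/2)
      + (if iset 2 C u = {c} then 1/2 else 0)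
      + (if iset 2 C u = {c, c'} then 1/6 else 0) := by
    intro u hu
    have hcu : c ∈ iset 2 C u := hmemc u hu
    by_cases h' : u ∈ sqBall 2 c'
    · have hc'u : c' ∈ iset 2 C u := hmemc' u h'
      have hsub : ({c, c'} : Finset (ℤ × ℤ)) ⊆ iset 2 C u := by
        intro x hx
        simp only [Finset.mem_insert, Finset.mem_singleton] at hx
        rcases hx with rfl | rfl
        · exact hcu
        · exact hc'u
      have hne1 : iset 2 C u ≠ {c} := by
        intro h
        rw [h, Finset.mem_singleton] at hc'u
        exact hne hc'u.symm
      have hcard2 : ({c, c'} : Finset (ℤ × ℤ)).card = 2 := by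
        rw [Finset.card_insert_of_notMem (by simpa using hne), Finset.card_singleton]
      by_cases h2 : iset 2 C u = {c, c'}
      · rw [h2, hcard2]
        simp only [h', if_true, if_pos rfl]
        split_ifs <;> norm_num
      · have h3 : 3 ≤ (iset 2 C u).card := by
          have hss : ({c, c'} : Finset (ℤ × ℤ)) ⊂ iset 2 C u :=
            ⟨hsub, fun h => h2 (Finset.Subset.antisymm (fun x hx => h hx) hsub)⟩
          have := Finset.card_lt_card hss
          omega
        have hle : (1:ℚ)/(iset 2 C u).card ≤ 1/3 := by
          apply one_div_le_one_div_of_le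
          · norm_num
          · exact_mod_cast h3
        simp only [h', hne1, h2, if_true, if_false]
        linarith
    · have hne2 : iset 2 C u ≠ {c, c'} := by
        intro h
        apply h'
        have : c' ∈ iset 2 C u := by rw [h]; simp
        exact hsymm c' u (Finset.mem_filter.1 this).1
      by_cases h1 : iset 2 C u = {c}
      · rw [h1, Finset.card_singleton]
        simp only [h', if_false, if_pos rfl]
        split_ifs <;> norm_num
      · have h2c : 2 ≤ (iset 2 C u).card := by
          have hss : ({c} : Finset (ℤ × ℤ)) ⊂ iset 2 C u :=
            ⟨Finset.singleton_subset_iff.2 hcu,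
             fun h => h1 (Finset.Subset.antisymm (fun x hx => h hx)
               (Finset.singleton_subset_iff.2 hcu))⟩
          have := Finset.card_lt_card hss
          simp at this
          omega
        have hle : (1:ℚ)/(iset 2 C u).card ≤ 1/2 := by
          apply one_div_le_one_div_of_le
          · norm_num
          · exact_mod_cast h2c
        simp only [h', h1, hne2, if_false]
        linarith
  have hsum := Finset.sum_le_sum key
  refine le_trans hsum ?_
  rw [Finset.sum_add_distrib, Finset.sum_add_distrib]
  have h1 : ∑ u ∈ sqBall 2 c, (if u ∈ sqBall 2 c' then (1:ℚ)/3 else 1/2) = 31/6 := by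
    rw [Finset.sum_ite, Finset.sum_const, Finset.sum_const]
    have hA : ((sqBall 2 c).filter (fun u => u ∈ sqBall 2 c')).card = 8 := by
      rw [Finset.filter_mem_eq_inter]
      exact card_inter c c' hdist
    have hB : ((sqBall 2 c).filter (fun u => ¬ u ∈ sqBall 2 c')).card = 5 := by
      have := Finset.card_filter_add_card_filter_not
        (s := sqBall 2 c) (p := fun u => u ∈ sqBall 2 c')
      rw [card_sqBall2] at this
      omega
    rw [hA, hB]
    norm_num
  have h2 : ∑ u ∈ sqBall 2 c, (if iset 2 C u = {c} then (1:ℚ)/2 else 0) ≤ 1/2 := by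
    rw [← Finset.sum_filter, Finset.sum_const]
    have hcard : ((sqBall 2 c).filter (fun u => iset 2 C u = {c})).card ≤ 1 := by
      apply Finset.card_le_one.2
      intro a ha b hb
      have ha' := (Finset.mem_filter.1 ha).2
      have hb' := (Finset.mem_filter.1 hb).2
      exact hC.2 a b (ha'.trans hb'.symm)
    calc ((sqBall 2 c).filter (fun u => iset 2 C u = {c})).card • ((1:ℚ)/2)
        ≤ 1 • ((1:ℚ)/2) := by
          apply nsmul_le_nsmul_left (by norm_num) hcard
      _ = 1/2 := by norm_num
  have h3 : ∑ u ∈ sqBall 2 c, (if iset 2 C u = {c, c'} then (1:ℚ)/6 else 0) ≤ 1/6 := by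
    rw [← Finset.sum_filter, Finset.sum_const]
    have hcard : ((sqBall 2 c).filter (fun u => iset 2 C u = {c, c'})).card ≤ 1 := by
      apply Finset.card_le_one.2
      intro a ha b hb
      have ha' := (Finset.mem_filter.1 ha).2
      have hb' := (Finset.mem_filter.1 hb).2
      exact hC.2 a b (ha'.trans hb'.symm)
    calc ((sqBall 2 c).filter (fun u => iset 2 C u = {c, c'})).card • ((1:ℚ)/6)
        ≤ 1 • ((1:ℚ)/6) := by
          apply nsmul_le_nsmul_left (by norm_num) hcard
      _ = 1/6 := by norm_num
  rw [h1]
  linarith
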